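/- For every u ∈ U₀ and every composition λ: φ_u(λ) > 0 if and only if λ ∈ GK_u, i.e., if and only if λ ≤ t_n(u) in the order of the Gnedin–Kingman graph for some n ≥ 1. -/

import Mathlib

open scoped ENNReal NNReal

namespace GK

/-! ## The Gnedin–Kingman graph -/

/-- Decrement (if the part is ≥ 2) or delete (otherwise) the part of `μ` at position `p`. -/
def stepAt (μ : List ℕ) (p : ℕ) : List ℕ :=
  if 2 ≤ μ.getD p 0 then μ.set p (μ.getD p 0 - 1) else μ.eraseIdx p

/-- Edge multiplicity `κ(ν,μ)` of the Gnedin–Kingman graph: the number of positions of `μ`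
at which decrementing a part ≥ 2 (or deleting a part equal to 1) produces `ν`. -/
def kappa (ν μ : List ℕ) : ℕ :=
  ((Finset.range μ.length).filter fun p => stepAt μ p = ν).card

/-- `ν ↗ μ`. -/
def Rel (ν μ : List ℕ) : Prop := 0 < kappa ν μ

def IsComposition (l : List ℕ) : Prop := ∀ n ∈ l, 0 < n

/-- Compositions: finite lists of positive integers. -/
abbrev Comp := {l : List ℕ // IsComposition l}

/-- The empty composition ∅. -/
def cEmpty : Comp := ⟨[], fun _ h => nomatch h⟩

/-- Harmonicity, for `[0,∞]`-valued functions on the Gnedin–Kingman graph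
(with the conventions `0·∞ = 0` and `x + ∞ = ∞` of `ℝ≥0∞`). -/
def HarmonicE (φ : Comp → ℝ≥0∞) : Prop :=
  ∀ l : Comp, φ l = ∑' μ : Comp, (kappa l.1 μ.1 : ℝ≥0∞) * φ μ

/-- Harmonicity, for real-valued functions. -/
def HarmonicR (φ : Comp → ℝ) : Prop :=
  ∀ l : Comp, φ l = ∑' μ : Comp, (kappa l.1 μ.1 : ℝ) * φ μ

/-- A finite harmonic function: real-valued (hence finite), nonnegative, harmonic. -/
def FiniteHarmonic (φ : Comp → ℝ) : Prop :=
  HarmonicR φ ∧ ∀ l, 0 ≤ φ l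

/-- The quasi-shuffle coefficient `c^γ_{α,β}`: the number of pairs of strictly increasing
maps `f, g` into the positions of `γ` which jointly cover all positions of `γ` and such that
each part of `γ` is the sum of the corresponding parts of `α` and `β`. -/
noncomputable def qsCoeff (α β γ : List ℕ) : ℕ :=
  Nat.card {fg : (Fin α.length → Fin γ.length) × (Fin β.length → Fin γ.length) //
    StrictMono fg.1 ∧ StrictMono fg.2 ∧
    (∀ s, (∃ i, fg.1 i = s) ∨ (∃ j, fg.2 j = s)) ∧
    ∀ s : Fin γ.length,
      γ.get s = (∑ i, if fg.1 i = s then α.get i else 0) +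
                (∑ j, if fg.2 j = s then β.get j else 0)}

/-- Indecomposability of a finite harmonic function normalized at ∅. -/
def IndecFin (φ : Comp → ℝ) : Prop :=
  ∀ φ₁ φ₂ : Comp → ℝ, FiniteHarmonic φ₁ → FiniteHarmonic φ₂ →
    φ₁ cEmpty = 1 → φ₂ cEmpty = 1 →
    ∀ c₁ c₂ : ℝ, 0 < c₁ → 0 < c₂ → c₁ + c₂ = 1 →
      (∀ l, φ l = c₁ * φ₁ l + c₂ * φ₂ l) → φ = φ₁ ∨ φ = φ₂

/-! ## Typed weight sequences, `M°_λ` and `U₀` -/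

/-- `M°_λ(v)` for a typed weight sequence `v` (`true` = h, `false` = v): the sum over all
decompositions of `λ` into consecutive (possibly empty) blocks, one for each entry of `v`,
where an h-block has at most one part and contributes `w^{|block|}`, and a v-block has all
parts equal to 1 and contributes `w^{ℓ}/ℓ!`. -/
noncomputable def Mcirc : List (ℝ × Bool) → List ℕ → ℝ
  | [], l => if l = [] then 1 else 0
  | (w, t) :: v, l =>
      ∑ i ∈ Finset.range (l.length + 1),
        (if t then (if (l.take i).length ≤ 1 then w ^ (l.take i).sum else 0)
         else if ∀ n ∈ l.take i, n = 1 then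
           w ^ (l.take i).length / ((l.take i).length.factorial : ℝ)
         else 0) * Mcirc v (l.drop i)

/-- Membership in `U₀`: positive weights of total sum 1, no two consecutive v's. -/
def memU0 (u : List (ℝ × Bool)) : Prop :=
  (∀ p ∈ u, 0 < p.1) ∧ (u.map Prod.fst).sum = 1 ∧
    List.Chain' (fun p q => p.2 = true ∨ q.2 = true) u

/-- `t_n(u)`: replace each h-interval by a part `n` and each v-interval by `n` ones. -/
def tnU (u : List (ℝ × Bool)) (n : ℕ) : List ℕ :=
  (u.map fun p => if p.2 then [n] else List.replicate n 1).flatten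

/-- Merge each maximal run of consecutive v-intervals into a single v-interval,
summing the weights. -/
def mergeV : List (ℝ × Bool) → List (ℝ × Bool)
  | [] => []
  | (w, true) :: rest => (w, true) :: mergeV rest
  | (w, false) :: rest =>
      match mergeV rest with
      | (w', false) :: rest' => (w + w', false) :: rest'
      | r => (w, false) :: r

/-! ## The set `Ũ₀` and the functions `φ_ũ` -/

/-- An element of `Ũ₀`. `t i = true` means type h, `false` means type v; `sep i` are the
separating compositions λ₀, …, λ_m. Only `w i`, `t i` for `i < m` and `sep i` for `i ≤ m`
are relevant. -/
structure UTilde where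
  m : ℕ
  w : ℕ → ℝ
  t : ℕ → Bool
  sep : ℕ → List ℕ
  sep_pos : ∀ i, i ≤ m → ∀ n ∈ sep i, 0 < n
  sep_nonempty : ∃ i, i ≤ m ∧ sep i ≠ []
  w_pos : ∀ i, i < m → 0 < w i
  w_sum : ∑ i ∈ Finset.range m, w i = 1
  vv : ∀ i, i + 1 < m → t i = false → t (i + 1) = false → sep (i + 1) ≠ []
  v_left : ∀ i, i < m → t i = false → sep i ≠ [] → 2 ≤ (sep i).getLastD 0
  v_right : ∀ i, i < m → t i = false → sep (i + 1) ≠ [] → 2 ≤ (sep (i + 1)).headD 0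

namespace UTilde

variable (u : UTilde)

/-- `λ₀ ⊔ f 0 ⊔ λ₁ ⊔ … ⊔ f (m-1) ⊔ λ_m`. -/
def blocks (f : ℕ → List ℕ) : List ℕ :=
  u.sep 0 ++ (List.ofFn fun i : Fin u.m => f (i : ℕ) ++ u.sep ((i : ℕ) + 1)).flatten

/-- `t_n(ũ)`. -/
def tn (n : ℕ) : List ℕ :=
  u.blocks fun i => if u.t i then [n] else List.replicate n 1

/-- Membership in `GK_ũ`. -/
def GKmem (l : List ℕ) : Prop := ∃ n, 1 ≤ n ∧ Relation.ReflTransGen Rel l (u.tn n)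

/-- Position `i` (of type h) is adjacent to a v-interval. -/
def adj (i : ℕ) : Prop :=
  (0 < i ∧ u.t (i - 1) = false ∧ u.sep i = []) ∨
  (i + 1 < u.m ∧ u.t (i + 1) = false ∧ u.sep (i + 1) = [])

instance (i : ℕ) : Decidable (u.adj i) := by unfold adj; infer_instance

def d (i : ℕ) : ℕ := if u.adj i then 2 else 1

/-- `λ(a,b)`, where `c` encodes both vectors: `a i = c i` on h-positions and
`b i = c i` on v-positions. -/
def lam (c : ℕ → ℕ) : List ℕ :=
  u.blocks fun i => if u.t i then [u.d i + c i] else List.replicate (c i) 1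

/-- `λ_ũ = λ(0,0)`. -/
def lam0 : List ℕ := u.lam fun _ => 0

/-- `Π_{i : t_i = h} w_i^{a_i} · Π_{i : t_i = v} w_i^{b_i}/b_i!`. -/
noncomputable def phiVal (c : ℕ → ℕ) : ℝ≥0∞ :=
  ∏ i ∈ Finset.range u.m,
    if u.t i then ENNReal.ofReal (u.w i) ^ c i
    else ENNReal.ofReal (u.w i) ^ c i / ((c i).factorial : ℝ≥0∞)

open Classical in
/-- The semifinite harmonic function `φ_ũ`. -/
noncomputable def phi (l : List ℕ) : ℝ≥0∞ :=
  if h : ∃ c : ℕ → ℕ, l = u.lam c then u.phiVal h.choose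
  else if u.GKmem l then ⊤ else 0

/-- `u^ε(ũ)`: each part of each separating composition is replaced by an h-interval
of length `ε`. -/
def uEps (ε : ℝ) : List (ℝ × Bool) :=
  ((u.sep 0).map fun _ => (ε, true)) ++
    (List.ofFn fun i : Fin u.m =>
      (u.w (i : ℕ), u.t (i : ℕ)) :: ((u.sep ((i : ℕ) + 1)).map fun _ => (ε, true))).flatten

/-- `n(ũ) = |λ₀| + … + |λ_m|`. -/
def nU : ℕ := ∑ i ∈ Finset.range (u.m + 1), (u.sep i).sum

/-- The list of intervals of `ũ` (separating compositions dropped). -/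
def ubarList : List (ℝ × Bool) := List.ofFn fun i : Fin u.m => (u.w (i : ℕ), u.t (i : ℕ))

end UTilde

/-! ## The cone `K` and the maps `F_φ` -/

/-- `V`: finitely supported real functions on compositions. -/
abbrev V := Comp →₀ ℝ

/-- `W`: span of the vectors `e_λ − Σ_μ κ(λ,μ)·e_μ`. -/
noncomputable def Wsub : Submodule ℝ V :=
  Submodule.span ℝ
    {x : V | ∃ l : Comp, ∀ μ : Comp, x μ = (if μ = l then 1 else 0) - (kappa l.1 μ.1 : ℝ)}

/-- `R = V/W`. -/
abbrev Rq := V ⧸ Wsub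

/-- The cone `K ⊆ R`: classes of nonnegative vectors. -/
def Kcone : Set Rq :=
  {a | ∃ x : V, (∀ μ, 0 ≤ x μ) ∧ Submodule.Quotient.mk x = a}

/-- `Σ_λ x(λ)·φ(λ)` for a representative `x`. -/
noncomputable def FphiV (φ : Comp → ℝ≥0∞) (x : V) : ℝ≥0∞ :=
  ∑' μ : Comp, ENNReal.ofReal (x μ) * φ μ

open Classical in
/-- `F_φ : K → [0,∞]` (defined via a choice of nonnegative representative; for harmonic `φ`
it is well defined). Outside `K` we set it to `0`. -/
noncomputable def Fphi (φ : Comp → ℝ≥0∞) (a : Rq) : ℝ≥0∞ :=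
  if h : a ∈ Kcone then FphiV φ h.choose else 0

/-- Semifiniteness: not finite, and `F_φ` is determined by its finite values from below. -/
def Semifinite (φ : Comp → ℝ≥0∞) : Prop :=
  (¬ ∀ l, φ l < ⊤) ∧
    ∀ a ∈ Kcone, Fphi φ a =
      sSup {y | ∃ b ∈ Kcone, a - b ∈ Kcone ∧ Fphi φ b < ⊤ ∧ y = Fphi φ b}

/-- Indecomposability of a semifinite harmonic function. -/
def IndecSemifinite (φ : Comp → ℝ≥0∞) : Prop :=
  ∀ ψ : Comp → ℝ≥0∞, HarmonicE ψ →
    (((∀ l, ψ l < ⊤) ∧ ψ ≠ 0) ∨ Semifinite ψ) →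
    (∀ a ∈ Kcone, Fphi ψ a ≤ Fphi φ a) →
    ∃ c : ℝ≥0, ∀ l, ψ l = (c : ℝ≥0∞) * φ l

end GK

namespace GK

/-! ### Auxiliary lemmas for Statement 7 -/

lemma rel_iff {a b : List ℕ} : Rel a b ↔ ∃ p, p < b.length ∧ stepAt b p = a := by
  unfold Rel kappa
  rw [Finset.card_pos, Finset.filter_nonempty_iff]
  simp

lemma stepAt_append_left {a : List ℕ} (b : List ℕ) {p : ℕ} (hp : p < a.length) :
    stepAt (a ++ b) p = stepAt a p ++ b := by
  unfold stepAt
  rw [List.getD_eq_getElem?_getD, List.getElem?_append_left hp,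
    ← List.getD_eq_getElem?_getD]
  split
  · rw [List.set_append_left _ _ hp]
  · rw [List.eraseIdx_append_of_lt_length hp]

lemma stepAt_append_right (a : List ℕ) {b : List ℕ} {p : ℕ} (hp : a.length ≤ p) :
    stepAt (a ++ b) p = a ++ stepAt b (p - a.length) := by
  unfold stepAt
  rw [List.getD_eq_getElem?_getD, List.getElem?_append_right hp,
    ← List.getD_eq_getElem?_getD]
  split
  · rw [List.set_append_right _ _ hp]
  · rw [List.eraseIdx_append_of_length_le hp]

lemma rel_append {a b : List ℕ} (x y : List ℕ) (h : Rel a b) :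
    Rel (x ++ a ++ y) (x ++ b ++ y) := by
  obtain ⟨p, hp, hs⟩ := rel_iff.1 h
  refine rel_iff.2 ⟨x.length + p, ?_, ?_⟩
  · simp only [List.length_append]; omega
  · rw [stepAt_append_left _ (by simp only [List.length_append]; omega),
      stepAt_append_right _ (by omega)]
    congr 1
    rw [Nat.add_sub_cancel_left, hs]

lemma chain_append {a b : List ℕ} (x y : List ℕ)
    (h : Relation.ReflTransGen Rel a b) :
    Relation.ReflTransGen Rel (x ++ a ++ y) (x ++ b ++ y) := by
  induction h with
  | refl => exact Relation.ReflTransGen.refl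
  | tail _ hr ih => exact ih.tail (rel_append x y hr)

lemma chain_append_left {a b : List ℕ} (x : List ℕ)
    (h : Relation.ReflTransGen Rel a b) :
    Relation.ReflTransGen Rel (x ++ a) (x ++ b) := by
  simpa using chain_append x [] h

lemma chain_append_right {a b : List ℕ} (y : List ℕ)
    (h : Relation.ReflTransGen Rel a b) :
    Relation.ReflTransGen Rel (a ++ y) (b ++ y) := by
  simpa using chain_append [] y h

lemma chain_single {k n : ℕ} (hk : 1 ≤ k) (hkn : k ≤ n) :
    Relation.ReflTransGen Rel [k] [n] := by
  induction n, hkn using Nat.le_induction with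
  | base => exact Relation.ReflTransGen.refl
  | succ n hn ih =>
    refine ih.tail (rel_iff.2 ⟨0, by simp, ?_⟩)
    unfold stepAt
    rw [if_pos (by simp; omega)]
    simp

lemma chain_nil_single {n : ℕ} (hn : 1 ≤ n) :
    Relation.ReflTransGen Rel [] [n] := by
  refine Relation.ReflTransGen.trans ?_ (chain_single le_rfl hn)
  refine Relation.ReflTransGen.single (rel_iff.2 ⟨0, by simp, ?_⟩)
  unfold stepAt
  simp

lemma chain_replicate {k n : ℕ} (hkn : k ≤ n) :
    Relation.ReflTransGen Rel (List.replicate k 1) (List.replicate n 1) := by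
  induction n, hkn using Nat.le_induction with
  | base => exact Relation.ReflTransGen.refl
  | succ n hn ih =>
    refine ih.tail (rel_iff.2 ⟨0, by simp, ?_⟩)
    unfold stepAt
    rw [List.replicate_succ]
    simp

/-- The coefficient of one block in the definition of `Mcirc`. -/
noncomputable def coeff (w : ℝ) (t : Bool) (c : List ℕ) : ℝ :=
  if t then (if c.length ≤ 1 then w ^ c.sum else 0)
  else if ∀ n ∈ c, n = 1 then w ^ c.length / (c.length.factorial : ℝ) else 0

lemma Mcirc_cons (w : ℝ) (t : Bool) (v : List (ℝ × Bool)) (l : List ℕ) :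
    Mcirc ((w, t) :: v) l =
      ∑ i ∈ Finset.range (l.length + 1), coeff w t (l.take i) * Mcirc v (l.drop i) := by
  rw [Mcirc]; rfl

lemma coeff_nonneg {w : ℝ} (hw : 0 ≤ w) (t : Bool) (c : List ℕ) : 0 ≤ coeff w t c := by
  unfold coeff; split_ifs <;> positivity

lemma Mcirc_nonneg (u : List (ℝ × Bool)) (hu : ∀ p ∈ u, 0 ≤ p.1) (l : List ℕ) :
    0 ≤ Mcirc u l := by
  induction u generalizing l with
  | nil => rw [Mcirc]; split <;> norm_num
  | cons q v ih =>
    obtain ⟨w, t⟩ := q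
    rw [Mcirc_cons]
    exact Finset.sum_nonneg fun i _ =>
      mul_nonneg (coeff_nonneg (hu (w, t) List.mem_cons_self) _ _)
        (ih (fun p hp => hu p (List.mem_cons_of_mem _ hp)) _)

lemma le_Mcirc_cons {w : ℝ} (hw : 0 ≤ w) (t : Bool) {v : List (ℝ × Bool)}
    (hv : ∀ p ∈ v, 0 ≤ p.1) (c b : List ℕ) :
    coeff w t c * Mcirc v b ≤ Mcirc ((w, t) :: v) (c ++ b) := by
  rw [Mcirc_cons]
  have h1 : c.length ∈ Finset.range ((c ++ b).length + 1) := by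
    simp only [Finset.mem_range, List.length_append]; omega
  have := Finset.single_le_sum
    (f := fun i => coeff w t ((c ++ b).take i) * Mcirc v ((c ++ b).drop i))
    (fun i _ => mul_nonneg (coeff_nonneg hw _ _) (Mcirc_nonneg v hv _)) h1
  simpa [List.take_left, List.drop_left] using this

lemma Mcirc_pos_elim {w : ℝ} {t : Bool} {v : List (ℝ × Bool)} {l : List ℕ}
    (hw : 0 ≤ w) (hv : ∀ p ∈ v, 0 ≤ p.1) (h : 0 < Mcirc ((w, t) :: v) l) :
    ∃ i ≤ l.length, 0 < coeff w t (l.take i) ∧ 0 < Mcirc v (l.drop i) := by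
  rw [Mcirc_cons] at h
  have : ∃ i ∈ Finset.range (l.length + 1),
      0 < coeff w t (l.take i) * Mcirc v (l.drop i) := by
    by_contra hc
    push_neg at hc
    have : Mcirc ((w, t) :: v) l ≤ 0 := by
      rw [Mcirc_cons]
      exact Finset.sum_nonpos fun i hi => hc i hi
    rw [Mcirc_cons] at this
    exact absurd h (not_lt.2 this)
  obtain ⟨i, hi, hterm⟩ := this
  refine ⟨i, by simpa using Nat.lt_succ_iff.1 (Finset.mem_range.1 hi), ?_, ?_⟩
  · rcases mul_pos_iff.1 hterm with ⟨h1, _⟩ | ⟨h1, _⟩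
    · exact h1
    · exact absurd h1 (not_lt.2 (coeff_nonneg hw _ _))
  · rcases mul_pos_iff.1 hterm with ⟨_, h2⟩ | ⟨_, h2⟩
    · exact h2
    · exact absurd h2 (not_lt.2 (Mcirc_nonneg v hv _))

lemma coeff_stepAt_pos {w : ℝ} {t : Bool} {c : List ℕ} (p : ℕ) (hw : 0 < w)
    (h : 0 < coeff w t c) : 0 < coeff w t (stepAt c p) := by
  have hlen : (stepAt c p).length ≤ c.length := by
    unfold stepAt; split
    · simp
    · exact List.length_eraseIdx_le c p
  cases t with
  | true =>
    have hc1 : c.length ≤ 1 := by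
      by_contra hcc
      rw [coeff, if_pos rfl, if_neg hcc] at h
      exact absurd h (lt_irrefl 0)
    rw [coeff, if_pos rfl, if_pos (le_trans hlen hc1)]
    exact pow_pos hw _
  | false =>
    have hc1 : ∀ n ∈ c, n = 1 := by
      by_contra hc
      simp only [coeff, Bool.false_eq_true, if_false, if_neg hc] at h
      exact absurd h (lt_irrefl 0)
    have hones : ∀ n ∈ stepAt c p, n = 1 := by
      intro n hn
      refine hc1 n ?_
      unfold stepAt at hn
      split at hn
      · rcases (List.mem_or_eq_of_mem_set hn) with h' | h'
        · exact h'
        · exfalso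
          rename_i hge
          rcases Nat.lt_or_ge p c.length with hp | hp
          · have h1 : c.getD p 0 = 1 := by
              rw [List.getD_eq_getElem _ _ hp]
              exact hc1 _ (c.getElem_mem hp)
            omega
          · rw [List.getD_eq_getElem?_getD, List.getElem?_eq_none hp] at hge
            simp at hge
      · exact (List.eraseIdx_sublist c p).mem hn
    simp only [coeff, Bool.false_eq_true, if_false, if_pos hones]
    positivity

lemma Mcirc_stepAt_pos (u : List (ℝ × Bool)) (hu : ∀ p ∈ u, 0 < p.1) (l : List ℕ)
    (p : ℕ) (h : 0 < Mcirc u l) : 0 < Mcirc u (stepAt l p) := by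
  induction u generalizing l p with
  | nil =>
    have hl : l = [] := by
      by_contra hc
      rw [Mcirc, if_neg hc] at h
      exact absurd h (lt_irrefl 0)
    subst hl
    have : stepAt [] p = [] := by unfold stepAt; simp
    rw [this]
    exact h
  | cons q v ih =>
    obtain ⟨w, t⟩ := q
    have hw : 0 < w := hu (w, t) List.mem_cons_self
    have hv : ∀ p ∈ v, 0 < p.1 := fun p hp => hu p (List.mem_cons_of_mem _ hp)
    have hv' : ∀ p ∈ v, 0 ≤ p.1 := fun p hp => (hv p hp).le
    obtain ⟨i, hi, hc, hb⟩ := Mcirc_pos_elim hw.le hv' h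
    have hdec : l = l.take i ++ l.drop i := (List.take_append_drop i l).symm
    rcases Nat.lt_or_ge p (l.take i).length with hp | hp
    · have : stepAt l p = stepAt (l.take i) p ++ l.drop i := by
        conv_lhs => rw [hdec]
        exact stepAt_append_left _ hp
      rw [this]
      exact lt_of_lt_of_le (mul_pos (coeff_stepAt_pos p hw hc) hb)
        (le_Mcirc_cons hw.le t hv' _ _)
    · have : stepAt l p = l.take i ++ stepAt (l.drop i) (p - (l.take i).length) := by
        conv_lhs => rw [hdec]
        exact stepAt_append_right _ hp
      rw [this]
      exact lt_of_lt_of_le (mul_pos hc (ih hv _ _ hb)) (le_Mcirc_cons hw.le t hv' _ _)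

lemma Mcirc_tnU_pos (u : List (ℝ × Bool)) (hu : ∀ p ∈ u, 0 < p.1) (n : ℕ)
    (hn : 1 ≤ n) : 0 < Mcirc u (tnU u n) := by
  induction u with
  | nil => simp [Mcirc, tnU]
  | cons q v ih =>
    obtain ⟨w, t⟩ := q
    have hw : 0 < w := hu (w, t) List.mem_cons_self
    have hv : ∀ p ∈ v, 0 < p.1 := fun p hp => hu p (List.mem_cons_of_mem _ hp)
    have hv' : ∀ p ∈ v, 0 ≤ p.1 := fun p hp => (hv p hp).le
    have hdec : tnU ((w, t) :: v) n =
        (if t then [n] else List.replicate n 1) ++ tnU v n := by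
      simp [tnU]
    rw [hdec]
    refine lt_of_lt_of_le (mul_pos ?_ (ih hv)) (le_Mcirc_cons hw.le t hv' _ _)
    cases t with
    | true =>
      have h2 : (0:ℝ) < w ^ n := pow_pos hw n
      simpa [coeff] using h2
    | false =>
      have h2 : (0:ℝ) < w ^ n / (n.factorial : ℝ) := by positivity
      simpa [coeff, List.mem_replicate] using h2

lemma length_le_sum {l : List ℕ} (hl : ∀ x ∈ l, 0 < x) : l.length ≤ l.sum := by
  induction l with
  | nil => simp
  | cons a l ih =>
    simp only [List.length_cons, List.sum_cons]
    have := hl a List.mem_cons_self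
    have := ih fun x hx => hl x (List.mem_cons_of_mem _ hx)
    omega

lemma Mcirc_forward (u : List (ℝ × Bool)) (hu : ∀ p ∈ u, 0 < p.1) (l : List ℕ)
    (hl : ∀ x ∈ l, 0 < x) (h : 0 < Mcirc u l) :
    ∃ n₀, 1 ≤ n₀ ∧ ∀ n, n₀ ≤ n → Relation.ReflTransGen Rel l (tnU u n) := by
  induction u generalizing l with
  | nil =>
    have hle : l = [] := by
      by_contra hc
      rw [Mcirc, if_neg hc] at h
      exact absurd h (lt_irrefl 0)
    subst hle
    exact ⟨1, le_rfl, fun n _ => Relation.ReflTransGen.refl⟩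
  | cons q v ih =>
    obtain ⟨w, t⟩ := q
    have hw : 0 < w := hu (w, t) List.mem_cons_self
    have hv : ∀ p ∈ v, 0 < p.1 := fun p hp => hu p (List.mem_cons_of_mem _ hp)
    have hv' : ∀ p ∈ v, 0 ≤ p.1 := fun p hp => (hv p hp).le
    obtain ⟨i, hi, hc, hb⟩ := Mcirc_pos_elim hw.le hv' h
    have hbl : ∀ x ∈ l.drop i, 0 < x := fun x hx => hl x (List.mem_of_mem_drop hx)
    obtain ⟨n₀, hn₀, hchain⟩ := ih hv _ hbl hb
    refine ⟨max n₀ (l.sum + 1), le_trans hn₀ (le_max_left _ _), fun n hn => ?_⟩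
    have hn1 : 1 ≤ n := le_trans (le_trans hn₀ (le_max_left _ _)) hn
    have hnsum : l.sum < n := lt_of_lt_of_le (Nat.lt_succ_self _)
      (le_trans (le_max_right _ _) hn)
    have hcl : ∀ x ∈ l.take i, 0 < x := fun x hx => hl x (List.mem_of_mem_take hx)
    have hsum_take : (l.take i).sum ≤ l.sum := by
      conv_rhs => rw [← List.take_append_drop i l]
      rw [List.sum_append]
      omega
    have hlen_take : (l.take i).length ≤ l.sum := by
      refine le_trans (length_le_sum hcl) hsum_take
    -- chain on the block
    have hblock : Relation.ReflTransGen Rel (l.take i)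
        (if t then [n] else List.replicate n 1) := by
      cases t with
      | true =>
        have hc1 : (l.take i).length ≤ 1 := by
          by_contra hcc
          rw [coeff, if_pos rfl, if_neg hcc] at hc
          exact absurd hc (lt_irrefl 0)
        simp only [if_true]
        match hlt : l.take i, hc1 with
        | [], _ => exact chain_nil_single hn1
        | [k], _ =>
          have hk : 0 < k := by
            refine hcl k ?_
            rw [hlt]; exact List.mem_singleton_self k
          have hkn : k ≤ n := by
            have : (l.take i).sum = k := by rw [hlt]; simp
            omega
          exact chain_single hk hkn
      | false =>
        have hc1 : ∀ x ∈ l.take i, x = 1 := by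
          by_contra hcc
          simp only [coeff, Bool.false_eq_true, if_false, if_neg hcc] at hc
          exact absurd hc (lt_irrefl 0)
        have : l.take i = List.replicate (l.take i).length 1 :=
          List.eq_replicate_of_mem hc1
        rw [this]
        simp only [Bool.false_eq_true, if_false]
        exact chain_replicate (by omega)
    have step1 : Relation.ReflTransGen Rel l ((l.take i) ++ tnU v n) := by
      conv_lhs => rw [← List.take_append_drop i l]
      exact chain_append_left _ (hchain n (le_trans (le_max_left _ _) hn))
    have step2 : Relation.ReflTransGen Rel ((l.take i) ++ tnU v n)
        ((if t then [n] else List.replicate n 1) ++ tnU v n) :=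
      chain_append_right _ hblock
    have hdec : tnU ((w, t) :: v) n =
        (if t then [n] else List.replicate n 1) ++ tnU v n := by
      simp [tnU]
    rw [hdec]
    exact step1.trans step2

lemma Mcirc_backward (u : List (ℝ × Bool)) (hu : ∀ p ∈ u, 0 < p.1) {a b : List ℕ}
    (h : Relation.ReflTransGen Rel a b) (hb : 0 < Mcirc u b) : 0 < Mcirc u a := by
  induction h using Relation.ReflTransGen.head_induction_on with
  | refl => exact hb
  | head hr _ ih =>
    obtain ⟨p, -, hs⟩ := rel_iff.1 hr
    rw [← hs]
    exact Mcirc_stepAt_pos u hu _ p ih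

/-- for `u ∈ U₀`, `φ_u(λ) > 0` iff `λ ∈ GK_u`, i.e. `λ ≤ t_n(u)` for some `n ≥ 1`. -/
theorem phiU_support (u : List (ℝ × Bool)) (hu : memU0 u) (l : Comp) :
    0 < Mcirc u l.1 ↔ ∃ n, 1 ≤ n ∧ Relation.ReflTransGen Rel l.1 (tnU u n) := by
  obtain ⟨hpos, -, -⟩ := hu
  constructor
  · intro h
    obtain ⟨n₀, hn₀, hch⟩ := Mcirc_forward u hpos l.1 l.2 h
    exact ⟨n₀, hn₀, hch n₀ le_rfl⟩
  · rintro ⟨n, hn, hch⟩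
    exact Mcirc_backward u hpos hch (Mcirc_tnU_pos u hpos n hn)

end GK
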